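/- For a query X = (x_1,...,x_q) with noise-free responses, define x⁺(X,i) ∈ argmax_x E[f(x) | r(X) = i] and X⁺ = (x⁺(X,1),...,x⁺(X,q)). Then V(X) ≤ qEUBO(X⁺), i.e., E[max_x E[f(x)|r(X)]] ≤ E[max_i f(x⁺(X, r(X)))] ≤ E[max_i f(x⁺(X,i))]. -/
import Mathlib


open MeasureTheory ProbabilityTheory Finset

lemma integrable_sup'_aux {Ω : Type*} [MeasurableSpace Ω] {μ : Measure Ω}
    {ι : Type*} (s : Finset ι) (hs : s.Nonempty) (g : ι → Ω → ℝ)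
    (hg : ∀ i, Integrable (g i) μ) :
    Integrable (fun ω => s.sup' hs fun i => g i ω) μ := by
  induction hs using Finset.Nonempty.cons_induction with
  | singleton a => simpa using hg a
  | cons a s h hs ih =>
      have : (fun ω => (Finset.cons a s h).sup' (Finset.cons_nonempty h) fun i => g i ω)
          = (g a) ⊔ (fun ω => s.sup' hs fun i => g i ω) := by
        funext ω
        exact Finset.sup'_cons hs (f := fun i => g i ω) (b := a)
      rw [this]
      exact (hg a).sup ih

/-- Let `x⁺(X,i)` maximize the conditional posterior mean `E[f(·) | r(X) = i]` and
`X⁺ = (x⁺(X,1),…,x⁺(X,q))`.  Then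
`V(X) = E[max_y E[f(y)|r(X)]] ≤ E[f(x⁺(X, r(X)))] ≤ E[max_i f(x⁺(X,i))] = qEUBO(X⁺)`,
where the first two quantities are written as sums over the values of `r(X)`. -/
theorem stmt5
    {Ω : Type*} [MeasurableSpace Ω] (μ : Measure Ω) [IsProbabilityMeasure μ]
    {X : Type*} [Fintype X] [Nonempty X]
    (q : ℕ) (hq : 1 ≤ q)
    (f : X → Ω → ℝ) (hmeas : ∀ y, Measurable (f y)) (hint : ∀ y, Integrable (f y) μ)
    (x : Fin q → X) (r : Ω → Fin q) (hr : Measurable r)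
    (xp : Fin q → X)
    (hxp : ∀ i (y : X),
      ∫ ω, f y ω ∂(μ[|r ⁻¹' {i}]) ≤ ∫ ω, f (xp i) ω ∂(μ[|r ⁻¹' {i}])) :
    (∑ i, (μ (r ⁻¹' {i})).toReal
        * (univ.sup' univ_nonempty fun y => ∫ ω, f y ω ∂(μ[|r ⁻¹' {i}])))
      ≤ ∑ i, (μ (r ⁻¹' {i})).toReal * ∫ ω, f (xp i) ω ∂(μ[|r ⁻¹' {i}])
    ∧ (∑ i, (μ (r ⁻¹' {i})).toReal * ∫ ω, f (xp i) ω ∂(μ[|r ⁻¹' {i}]))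
      ≤ ∫ ω, (univ.sup' ⟨⟨0, hq⟩, mem_univ _⟩ fun i => f (xp i) ω) ∂μ := by
  have : Nonempty (Fin q) := ⟨⟨0, hq⟩⟩
  set A : Fin q → Set Ω := fun i => r ⁻¹' {i} with hA
  have hAm : ∀ i, MeasurableSet (A i) := fun i => hr (measurableSet_singleton i)
  constructor
  · apply Finset.sum_le_sum
    intro i _
    apply mul_le_mul_of_nonneg_left _ ENNReal.toReal_nonneg
    exact Finset.sup'_le _ _ fun y _ => hxp i y
  · -- rewrite each term as an integral over A i w.r.t. μ
    have key : ∀ (i : Fin q) (g : Ω → ℝ),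
        (μ (A i)).toReal * ∫ ω, g ω ∂(μ[|A i]) = ∫ ω in A i, g ω ∂μ := by
      intro i g
      rw [ProbabilityTheory.cond, integral_smul_measure]
      rcases eq_or_ne (μ (A i)) 0 with h0 | h0
      · simp [h0, Measure.restrict_eq_zero.mpr h0]
      · rw [smul_eq_mul, ← mul_assoc, ENNReal.toReal_inv,
          mul_inv_cancel₀ (by simp [ENNReal.toReal_ne_zero, h0, measure_ne_top μ]), one_mul]
    have hG : Integrable (fun ω => univ.sup' ⟨⟨0, hq⟩, mem_univ _⟩ fun i => f (xp i) ω) μ :=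
      integrable_sup'_aux _ _ _ fun i => hint (xp i)
    calc ∑ i, (μ (A i)).toReal * ∫ ω, f (xp i) ω ∂(μ[|A i])
        = ∑ i, ∫ ω in A i, f (xp i) ω ∂μ := by
          exact Finset.sum_congr rfl fun i _ => key i _
      _ ≤ ∑ i, ∫ ω in A i, (univ.sup' ⟨⟨0, hq⟩, mem_univ _⟩ fun j => f (xp j) ω) ∂μ := by
          apply Finset.sum_le_sum
          intro i _
          apply integral_mono_ae ((hint (xp i)).restrict) (hG.restrict)
          filter_upwards with ω
          exact Finset.le_sup' (fun j => f (xp j) ω) (mem_univ i)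
      _ = ∫ ω in ⋃ i ∈ univ, A i, (univ.sup' ⟨⟨0, hq⟩, mem_univ _⟩ fun j => f (xp j) ω) ∂μ := by
          rw [integral_biUnion_finset univ (fun i _ => hAm i)]
          · intro i _ j _ hij
            exact Disjoint.preimage r (by simp [Set.disjoint_singleton, hij])
          · exact fun i _ => hG.restrict
      _ = ∫ ω, (univ.sup' ⟨⟨0, hq⟩, mem_univ _⟩ fun i => f (xp i) ω) ∂μ := by
          have : ⋃ i ∈ (univ : Finset (Fin q)), A i = Set.univ := by
            ext ω; simp [hA]
          rw [this, setIntegral_univ]
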